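/- Let k ≥ 2 and let d, D be positive integers with k ≤ dD, and let C_k be the associated transfer matrix. Then for any two transpositions t, t' ∈ S_k one has ⟨t|C_k|t'⟩ = 0 if t ≠ t', and ⟨t|C_k|t⟩ = (dD² − d)/(d²D² − 1). That is, the diagonal block of C_k corresponding to the transpositions equals μ₂ times the identity, where μ₂ = (dD² − d)/(d²D² − 1). -/

import Mathlib

open Equiv Matrix

/-- Number of cycles of a permutation, counting fixed points as 1-cycles. -/
noncomputable def cyc {k : ℕ} (π : Equiv.Perm (Fin k)) : ℕ :=
  (k - π.cycleType.sum) + Multiset.card π.cycleType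

/-- Gram matrix `G(q)_{στ} = q^{#(στ⁻¹)}`. -/
noncomputable def Gram (k q : ℕ) :
    Matrix (Equiv.Perm (Fin k)) (Equiv.Perm (Fin k)) ℝ :=
  Matrix.of fun σ τ => (q : ℝ) ^ cyc (σ * τ⁻¹)

namespace CkAux

open Equiv.Perm

variable {k : ℕ}

/-- Setoid of the same-cycle relation. -/
def scS (π : Perm (Fin k)) : Setoid (Fin k) :=
  ⟨π.SameCycle, ⟨fun x => SameCycle.refl π x, SameCycle.symm, SameCycle.trans⟩⟩

noncomputable def norb (π : Perm (Fin k)) : ℕ := Nat.card (Quotient (scS π))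

theorem finite_quot (s : Setoid (Fin k)) : Finite (Quotient s) :=
  Finite.of_surjective (Quotient.mk s) (fun z => Quotient.inductionOn z fun x => ⟨x, rfl⟩)

theorem fixed_of_sameCycle {π : Perm (Fin k)} {x y : Fin k} (h : π x = x)
    (hxy : π.SameCycle x y) : y = x := by
  obtain ⟨i, hi⟩ := hxy
  rw [← hi, zpow_apply_eq_self_of_apply_eq_self h]

theorem norb_eq_cyc (π : Perm (Fin k)) : norb π = cyc π := by
  classical
  set T := ({x : Fin k // π x = x} ⊕ {c : Perm (Fin k) // c ∈ π.cycleFactorsFinset}) with hT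
  let F : Fin k → T := fun x =>
    if h : π x = x then Sum.inl ⟨x, h⟩
    else Sum.inr ⟨π.cycleOf x, cycleOf_mem_cycleFactorsFinset_iff.2 (mem_support.2 h)⟩
  have hresp : ∀ x y, π.SameCycle x y → F x = F y := by
    intro x y hxy
    by_cases hx : π x = x
    · rw [fixed_of_sameCycle hx hxy]
    · have hy : ¬ π y = y := fun h => hx (by rw [fixed_of_sameCycle h hxy.symm]; exact h)
      simp only [F, dif_neg hx, dif_neg hy]
      exact congrArg _ (Subtype.ext hxy.cycleOf_eq)
  let G : Quotient (scS π) → T := Quotient.lift F hresp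
  have hGbij : Function.Bijective G := by
    constructor
    · intro z w
      refine Quotient.inductionOn₂ z w ?_
      intro x y hxy
      apply Quotient.sound
      change F x = F y at hxy
      simp only [F] at hxy
      by_cases hx : π x = x <;> by_cases hy : π y = y
      · rw [dif_pos hx, dif_pos hy, Sum.inl.injEq, Subtype.mk.injEq] at hxy
        rw [hxy]
      · rw [dif_pos hx, dif_neg hy] at hxy; exact absurd hxy (by simp)
      · rw [dif_neg hx, dif_pos hy] at hxy; exact absurd hxy (by simp)
      · rw [dif_neg hx, dif_neg hy, Sum.inr.injEq, Subtype.mk.injEq] at hxy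
        have hcc : π.cycleOf x = π.cycleOf y := hxy
        have hy' : y ∈ (π.cycleOf y).support :=
          mem_support_cycleOf_iff.2 ⟨SameCycle.refl _ _, mem_support.2 hy⟩
        rw [← hcc] at hy'
        exact (mem_support_cycleOf_iff.1 hy').1
    · intro s
      rcases s with ⟨x, h⟩ | ⟨c, hc⟩
      · exact ⟨Quotient.mk _ x, by show F x = _; simp only [F, dif_pos h]⟩
      · have hcyc : c.IsCycle := (mem_cycleFactorsFinset_iff.1 hc).1
        obtain ⟨x, hx, -⟩ := hcyc
        have hxc : x ∈ c.support := mem_support.2 hx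
        have hcx : c = π.cycleOf x := cycle_is_cycleOf hxc hc
        have hxπ : x ∈ π.support := cycleOf_mem_cycleFactorsFinset_iff.1 (hcx ▸ hc)
        refine ⟨Quotient.mk _ x, ?_⟩
        show F x = _
        simp only [F, dif_neg (mem_support.1 hxπ)]
        exact congrArg _ (Subtype.ext hcx.symm)
  have hcard : norb π = Nat.card T := Nat.card_eq_of_bijective G hGbij
  have h1 : Nat.card {x : Fin k // π x = x} = k - π.cycleType.sum := by
    have e : {x : Fin k // π x = x} ≃ {x : Fin k // x ∈ π.supportᶜ} :=
      Equiv.subtypeEquivRight (fun x => by simp [Finset.mem_compl, mem_support, not_not])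
    rw [Nat.card_congr e, Nat.card_eq_fintype_card, Fintype.card_coe, Finset.card_compl,
      sum_cycleType, Fintype.card_fin]
  have h2 : Nat.card {c : Perm (Fin k) // c ∈ π.cycleFactorsFinset} =
      Multiset.card π.cycleType := by
    rw [Nat.card_eq_fintype_card, Fintype.card_coe, cycleType_def, Multiset.card_map]
    rfl
  rw [hcard, hT, Nat.card_sum, h1, h2, cyc]

theorem const_on_cycles {q : ℕ} {π : Perm (Fin k)} {f : Fin k → Fin q}
    (hf : f ∘ ⇑π = f) : ∀ (i : ℤ) (x : Fin k), f ((π ^ i) x) = f x := by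
  have hnat : ∀ (n : ℕ) (x : Fin k), f ((π ^ n) x) = f x := by
    intro n
    induction n with
    | zero => intro x; simp
    | succ n ih =>
      intro x
      rw [pow_succ, Perm.mul_apply]
      rw [ih (π x)]
      exact congrFun hf x
  intro i x
  cases i with
  | ofNat n => rw [Int.ofNat_eq_coe, zpow_natCast]; exact hnat n x
  | negSucc n =>
    rw [zpow_negSucc]
    conv_rhs => rw [show x = (π ^ (n + 1)) (((π ^ (n + 1))⁻¹) x) by rw [Perm.inv_def, Equiv.apply_symm_apply]]
    rw [hnat (n + 1)]

theorem card_invariant (q : ℕ) (π : Perm (Fin k)) :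
    Nat.card {f : Fin k → Fin q // f ∘ ⇑π = f} = q ^ cyc π := by
  classical
  letI sπ := scS π
  haveI : Finite (Quotient sπ) := finite_quot _
  have hmk : ∀ (x : Fin k), (Quotient.mk sπ (π x)) = Quotient.mk sπ x := by
    intro x
    exact Quotient.sound ⟨-1, by simp⟩
  let e : {f : Fin k → Fin q // f ∘ ⇑π = f} ≃ (Quotient sπ → Fin q) :=
    { toFun := fun f => Quotient.lift f.1 (fun x y hxy => by
        obtain ⟨i, hi⟩ := hxy
        rw [← hi, const_on_cycles f.2 i x])
      invFun := fun g => ⟨fun x => g (Quotient.mk sπ x),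
        funext fun x => congrArg g (hmk x)⟩
      left_inv := fun f => Subtype.ext rfl
      right_inv := fun g => funext fun z => Quotient.inductionOn z fun x => rfl }
  rw [Nat.card_congr e, Nat.card_fun, Nat.card_eq_fintype_card (α := Fin q), Fintype.card_fin,
    ← norb_eq_cyc]
  rfl

theorem card_comp_eq (q : ℕ) (σ τ : Perm (Fin k)) :
    Nat.card {f : Fin k → Fin q // f ∘ ⇑σ = f ∘ ⇑τ} = q ^ cyc (σ * τ⁻¹) := by
  rw [← card_invariant q (σ * τ⁻¹)]
  refine Nat.card_congr (Equiv.subtypeEquivRight fun f => ?_).symm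
  constructor
  · intro h
    funext x
    have h1 := congrFun h (τ x)
    simp only [Function.comp_apply, Perm.mul_apply, Perm.inv_def, Equiv.symm_apply_apply] at h1
    exact h1
  · intro h
    funext x
    have h1 := congrFun h (τ⁻¹ x)
    simp only [Function.comp_apply, Perm.mul_apply, Perm.inv_def, Equiv.apply_symm_apply] at h1
    exact h1

variable (k) in
/-- 0/1 matrix whose Gram matrix is `Gram k q`. -/
noncomputable def Bm (q : ℕ) :
    Matrix (Perm (Fin k)) ((Fin k → Fin q) × (Fin k → Fin q)) ℝ :=
  Matrix.of fun σ p => if p.2 = p.1 ∘ ⇑σ then 1 else 0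

theorem gram_eq_mul (q : ℕ) : Gram k q = Bm k q * (Bm k q)ᵀ := by
  classical
  ext σ τ
  rw [Matrix.mul_apply]
  have hterm : ∀ p : (Fin k → Fin q) × (Fin k → Fin q),
      Bm k q σ p * (Bm k q)ᵀ p τ =
        (if p.2 = p.1 ∘ ⇑σ then 1 else 0) * (if p.2 = p.1 ∘ ⇑τ then 1 else 0) := fun p => rfl
  simp only [hterm]
  rw [Fintype.sum_prod_type]
  have hinner : ∀ f : Fin k → Fin q,
      (∑ g : Fin k → Fin q, (if g = f ∘ ⇑σ then (1:ℝ) else 0) * (if g = f ∘ ⇑τ then 1 else 0)) =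
        if f ∘ ⇑σ = f ∘ ⇑τ then 1 else 0 := by
    intro f
    rw [Finset.sum_eq_single (f ∘ ⇑σ)]
    · simp
    · intro g _ hg; rw [if_neg hg, zero_mul]
    · intro h; exact absurd (Finset.mem_univ _) h
  simp only [hinner]
  rw [Finset.sum_boole]
  have : (Finset.univ.filter fun f : Fin k → Fin q => f ∘ ⇑σ = f ∘ ⇑τ).card =
      q ^ cyc (σ * τ⁻¹) := by
    rw [← card_comp_eq q σ τ, Nat.card_eq_fintype_card, Fintype.card_subtype]
  rw [this, Gram]
  push_cast
  rfl

theorem gram_isUnit {q : ℕ} (hkq : k ≤ q) : IsUnit (Gram k q).det := by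
  classical
  rw [isUnit_iff_ne_zero]
  intro hdet
  obtain ⟨x, hx0, hx⟩ := (Matrix.exists_mulVec_eq_zero_iff).2 hdet
  apply hx0
  have h1 : x ⬝ᵥ (Gram k q *ᵥ x) = 0 := by rw [hx, dotProduct_zero]
  rw [gram_eq_mul, ← Matrix.mulVec_mulVec, Matrix.dotProduct_mulVec,
    Matrix.mulVec_transpose] at h1
  have h3 : x ᵥ* Bm k q = 0 := dotProduct_self_eq_zero.mp h1
  funext σ₀
  let f₀ : Fin k → Fin q := Fin.castLE hkq
  have hinj : Function.Injective f₀ := Fin.castLE_injective hkq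
  have h4 := congrFun h3 (f₀, f₀ ∘ ⇑σ₀)
  have h5 : ∀ σ : Perm (Fin k), (f₀ ∘ ⇑σ₀ = f₀ ∘ ⇑σ) ↔ σ = σ₀ := by
    intro σ
    constructor
    · intro h; exact (Equiv.ext fun i => hinj (congrFun h i)).symm
    · rintro rfl; rfl
  have h6 : (x ᵥ* Bm k q) (f₀, f₀ ∘ ⇑σ₀) = x σ₀ := by
    simp only [Matrix.vecMul, dotProduct]
    have hterm : ∀ σ : Perm (Fin k),
        x σ * Bm k q σ (f₀, f₀ ∘ ⇑σ₀) = if σ = σ₀ then x σ else 0 := by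
      intro σ
      show x σ * (if f₀ ∘ ⇑σ₀ = f₀ ∘ ⇑σ then (1:ℝ) else 0) = _
      by_cases h : σ = σ₀
      · rw [if_pos ((h5 σ).2 h), if_pos h, mul_one]
      · rw [if_neg (fun hc => h ((h5 σ).1 hc)), if_neg h, mul_zero]
    simp only [hterm]
    rw [Finset.sum_ite_eq' Finset.univ σ₀ x]
    simp
  rw [h4] at h6
  simp only [Pi.zero_apply] at h6
  exact h6.symm

/-- Same-cycle relation with the classes of `a` and `b` merged. -/
def mrel (π : Perm (Fin k)) (a b : Fin k) : Fin k → Fin k → Prop := fun x y =>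
  π.SameCycle x y ∨
    ((π.SameCycle x a ∨ π.SameCycle x b) ∧ (π.SameCycle y a ∨ π.SameCycle y b))

theorem mrel_equivalence (π : Perm (Fin k)) (a b : Fin k) : Equivalence (mrel π a b) := by
  constructor
  · intro x; exact Or.inl (SameCycle.refl _ _)
  · rintro x y (h | ⟨h1, h2⟩)
    · exact Or.inl h.symm
    · exact Or.inr ⟨h2, h1⟩
  · rintro x y z (hxy | ⟨h1, h2⟩) (hyz | ⟨h3, h4⟩)
    · exact Or.inl (hxy.trans hyz)
    · exact Or.inr ⟨h3.imp hxy.trans hxy.trans, h4⟩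
    · exact Or.inr ⟨h1, h2.imp hyz.symm.trans hyz.symm.trans⟩
    · exact Or.inr ⟨h1, h4⟩

def mS (π : Perm (Fin k)) (a b : Fin k) : Setoid (Fin k) :=
  ⟨mrel π a b, mrel_equivalence π a b⟩

theorem mrel_apply_swap (τ : Perm (Fin k)) (a b x : Fin k) :
    mrel τ a b x ((τ * Equiv.swap a b) x) := by
  by_cases hxa : x = a
  · subst hxa
    have h : (τ * Equiv.swap x b) x = τ b := by
      rw [Perm.mul_apply, Equiv.swap_apply_left]
    rw [h]
    exact Or.inr ⟨Or.inl (SameCycle.refl _ _), Or.inr (sameCycle_apply_left.2 (SameCycle.refl _ _))⟩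
  by_cases hxb : x = b
  · subst hxb
    have h : (τ * Equiv.swap a x) x = τ a := by
      rw [Perm.mul_apply, Equiv.swap_apply_right]
    rw [h]
    exact Or.inr ⟨Or.inr (SameCycle.refl _ _), Or.inl (sameCycle_apply_left.2 (SameCycle.refl _ _))⟩
  · have h : (τ * Equiv.swap a b) x = τ x := by
      rw [Perm.mul_apply, Equiv.swap_apply_of_ne_of_ne hxa hxb]
    rw [h]
    exact Or.inl (sameCycle_apply_right.2 (SameCycle.refl _ _))

theorem mrel_pow_swap (τ : Perm (Fin k)) (a b : Fin k) (n : ℕ) (x : Fin k) :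
    mrel τ a b x (((τ * Equiv.swap a b) ^ n) x) := by
  induction n with
  | zero => exact Or.inl (SameCycle.refl _ _)
  | succ n ih =>
    have h : ((τ * Equiv.swap a b) ^ (n + 1)) x
        = (τ * Equiv.swap a b) (((τ * Equiv.swap a b) ^ n) x) := by
      rw [pow_succ', Perm.mul_apply]
    rw [h]
    exact (mrel_equivalence τ a b).trans ih (mrel_apply_swap τ a b _)

theorem sameCycle_imp_mrel (τ : Perm (Fin k)) (a b : Fin k) {x y : Fin k}
    (h : (τ * Equiv.swap a b).SameCycle x y) : mrel τ a b x y := by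
  obtain ⟨i, hi⟩ := h
  cases i with
  | ofNat n =>
    rw [Int.ofNat_eq_coe, zpow_natCast] at hi
    rw [← hi]
    exact mrel_pow_swap τ a b n x
  | negSucc n =>
    rw [zpow_negSucc] at hi
    have h2 : ((τ * Equiv.swap a b) ^ (n + 1)) y = x := by
      rw [← hi, Perm.inv_def, Equiv.apply_symm_apply]
    have := mrel_pow_swap τ a b (n + 1) y
    rw [h2] at this
    exact (mrel_equivalence τ a b).symm this


theorem mrel_mul_swap_imp (τ : Perm (Fin k)) (a b x y : Fin k)
    (h : mrel (τ * Equiv.swap a b) a b x y) : mrel τ a b x y := by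
  have E := mrel_equivalence τ a b
  have hab : mrel τ a b a b :=
    Or.inr ⟨Or.inl (SameCycle.refl _ _), Or.inr (SameCycle.refl _ _)⟩
  rcases h with h | ⟨h1, h2⟩
  · exact sameCycle_imp_mrel τ a b h
  · have t1 : mrel τ a b x a ∨ mrel τ a b x b :=
      h1.imp (sameCycle_imp_mrel τ a b) (sameCycle_imp_mrel τ a b)
    have t2 : mrel τ a b y a ∨ mrel τ a b y b :=
      h2.imp (sameCycle_imp_mrel τ a b) (sameCycle_imp_mrel τ a b)
    have t1' : mrel τ a b x a := t1.elim id (fun h => E.trans h (E.symm hab))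
    have t2' : mrel τ a b y a := t2.elim id (fun h => E.trans h (E.symm hab))
    exact E.trans t1' (E.symm t2')

theorem mS_mul_swap (τ : Perm (Fin k)) (a b : Fin k) :
    mS (τ * Equiv.swap a b) a b = mS τ a b := by
  have key : ∀ σ : Perm (Fin k), ∀ x y, mrel (σ * Equiv.swap a b) a b x y → mrel σ a b x y :=
    fun σ x y h => mrel_mul_swap_imp σ a b x y h
  apply Setoid.ext
  intro x y
  constructor
  · exact key τ x y
  · intro h
    have h2 : mrel ((τ * Equiv.swap a b) * Equiv.swap a b) a b x y := by
      rw [mul_assoc, Equiv.swap_mul_self, mul_one]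
      exact h
    exact key (τ * Equiv.swap a b) x y h2

theorem card_mS_le (π : Perm (Fin k)) (a b : Fin k) :
    Nat.card (Quotient (mS π a b)) ≤ norb π := by
  haveI : Finite (Quotient (scS π)) := finite_quot _
  refine Nat.card_le_card_of_surjective
    (Quotient.map' (s₁ := scS π) (s₂ := mS π a b) id (fun x y h => Or.inl h)) ?_
  intro z
  refine Quotient.inductionOn z fun x => ⟨Quotient.mk _ x, rfl⟩

theorem norb_le_card_mS (π : Perm (Fin k)) (a b : Fin k) :
    norb π ≤ Nat.card (Quotient (mS π a b)) + 1 := by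
  classical
  haveI : Finite (Quotient (mS π a b)) := finite_quot _
  have hresp : ∀ x y : Fin k, π.SameCycle x y →
      (if π.SameCycle x b then (Sum.inr () : Quotient (mS π a b) ⊕ Unit)
        else Sum.inl (Quotient.mk (mS π a b) x)) =
      (if π.SameCycle y b then (Sum.inr () : Quotient (mS π a b) ⊕ Unit)
        else Sum.inl (Quotient.mk (mS π a b) y)) := by
    intro x y h
    by_cases hxb : π.SameCycle x b
    · rw [if_pos hxb, if_pos (h.symm.trans hxb)]
    · rw [if_neg hxb, if_neg (fun hyb => hxb (h.trans hyb))]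
      exact congrArg _ (Quotient.sound (Or.inl h))
  let φ : Quotient (scS π) → Quotient (mS π a b) ⊕ Unit :=
    Quotient.lift (fun x => if π.SameCycle x b then Sum.inr ()
      else Sum.inl (Quotient.mk (mS π a b) x)) hresp
  have hinj : Function.Injective φ := by
    intro z w
    refine Quotient.inductionOn₂ z w ?_
    intro x y h
    change (if π.SameCycle x b then (Sum.inr () : Quotient (mS π a b) ⊕ Unit)
        else Sum.inl (Quotient.mk (mS π a b) x)) =
      (if π.SameCycle y b then (Sum.inr () : Quotient (mS π a b) ⊕ Unit)
        else Sum.inl (Quotient.mk (mS π a b) y)) at h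
    by_cases hxb : π.SameCycle x b <;> by_cases hyb : π.SameCycle y b
    · exact Quotient.sound (hxb.trans hyb.symm)
    · rw [if_pos hxb, if_neg hyb] at h; exact absurd h (by simp)
    · rw [if_neg hxb, if_pos hyb] at h; exact absurd h (by simp)
    · rw [if_neg hxb, if_neg hyb, Sum.inl.injEq] at h
      have hm : mrel π a b x y := Quotient.exact' (s₁ := mS π a b) h
      apply Quotient.sound
      rcases hm with hm | ⟨h1, h2⟩
      · exact hm
      · have h1' : π.SameCycle x a := h1.resolve_right hxb
        have h2' : π.SameCycle y a := h2.resolve_right hyb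
        exact h1'.trans h2'.symm
  have := Nat.card_le_card_of_injective φ hinj
  rwa [Nat.card_sum, show Nat.card Unit = 1 from Nat.card_unique] at this

theorem sign_cyc (π : Perm (Fin k)) :
    (-1 : ℤˣ) ^ (cyc π) * Perm.sign π = (-1) ^ k := by
  rw [Perm.sign_of_cycleType, ← pow_add]
  have hsum : π.cycleType.sum ≤ k := by
    rw [Equiv.Perm.sum_cycleType]
    simpa using Finset.card_le_univ π.support
  have hexp : cyc π + (π.cycleType.sum + Multiset.card π.cycleType)
      = k + 2 * Multiset.card π.cycleType := by
    unfold cyc; omega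
  rw [hexp, pow_add, pow_mul, neg_one_sq, one_pow, mul_one]

theorem cyc_mul_swap (σ : Perm (Fin k)) {a b : Fin k} (hab : a ≠ b) :
    cyc (σ * Equiv.swap a b) = cyc σ + 1 ∨ cyc σ = cyc (σ * Equiv.swap a b) + 1 := by
  classical
  set σ' := σ * Equiv.swap a b with hσ'
  -- bounds via the merged quotient
  have e1 : Nat.card (Quotient (mS σ a b)) ≤ norb σ := card_mS_le σ a b
  have e2 : norb σ ≤ Nat.card (Quotient (mS σ a b)) + 1 := norb_le_card_mS σ a b
  have e3 : Nat.card (Quotient (mS σ a b)) ≤ norb σ' := by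
    have := card_mS_le σ' a b
    rwa [hσ', mS_mul_swap σ a b] at this
  have e4 : norb σ' ≤ Nat.card (Quotient (mS σ a b)) + 1 := by
    have := norb_le_card_mS σ' a b
    rwa [hσ', mS_mul_swap σ a b] at this
  -- parity
  have hne : cyc σ' ≠ cyc σ := by
    intro hEq
    have k1 := sign_cyc σ
    have k2 := sign_cyc σ'
    rw [hEq] at k2
    rw [hσ', Perm.sign_mul, Equiv.Perm.sign_swap hab] at k2
    have h2 : Perm.sign σ * 1 = Perm.sign σ * (-1) := by
      rw [mul_one]
      exact mul_left_cancel (k1.trans k2.symm)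
    have h3 : (1 : ℤˣ) = -1 := mul_left_cancel h2
    exact absurd h3 (by decide)
  rw [← norb_eq_cyc, ← norb_eq_cyc] at hne ⊢
  omega

theorem cyc_inv (π : Perm (Fin k)) : cyc π⁻¹ = cyc π := by
  unfold cyc; rw [Equiv.Perm.cycleType_inv]

theorem scalar1 {d D : ℝ} (n : ℕ) (h2 : 2 ≤ d * D) (hd : 0 ≤ d) (hD : 0 ≤ D) :
    (d*D)^n * (D*(d^2-1)/(d^2*D^2-1)) + (d*D)^(n+1) * (d*(D^2-1)/(d^2*D^2-1))
      = d^n * D^(n+1) := by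
  have hΔ : d^2*D^2 - 1 ≠ 0 := by nlinarith
  field_simp
  ring

theorem scalar2 {d D : ℝ} (m : ℕ) (h2 : 2 ≤ d * D) (hd : 0 ≤ d) (hD : 0 ≤ D) :
    (d*D)^(m+1) * (D*(d^2-1)/(d^2*D^2-1)) + (d*D)^m * (d*(D^2-1)/(d^2*D^2-1))
      = d^(m+1) * D^m := by
  have hΔ : d^2*D^2 - 1 ≠ 0 := by nlinarith
  field_simp
  ring

end CkAux

/-- Weingarten matrix `W = G(q)⁻¹`, so that `Wg(στ⁻¹, q) = W σ τ`. -/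
noncomputable def WgM (k q : ℕ) :
    Matrix (Equiv.Perm (Fin k)) (Equiv.Perm (Fin k)) ℝ :=
  (Gram k q)⁻¹

/-- Transfer matrix `⟨τ|C_k|θ⟩ = Σ_σ Wg(στ⁻¹, dD) d^{#(σ)} D^{#(σθ⁻¹)}`. -/
noncomputable def Ck (k d D : ℕ) :
    Matrix (Equiv.Perm (Fin k)) (Equiv.Perm (Fin k)) ℝ :=
  Matrix.of fun τ θ =>
    ∑ σ : Equiv.Perm (Fin k),
      WgM k (d * D) σ τ * (d : ℝ) ^ cyc σ * (D : ℝ) ^ cyc (σ * θ⁻¹)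

open CkAux in
/-- The diagonal block of `C_k` indexed by transpositions equals `μ₂ = (dD² − d)/(d²D² − 1)`
times the identity: `⟨t|C_k|t'⟩ = 0` for distinct transpositions and `⟨t|C_k|t⟩ = μ₂`. -/
theorem Ck_transposition_block (k d D : ℕ) (hk : 2 ≤ k) (hd : 0 < d) (hD : 0 < D)
    (hkdD : k ≤ d * D) (t t' : Equiv.Perm (Fin k)) (ht : t.IsSwap) (ht' : t'.IsSwap) :
    Ck k d D t t' =
      if t = t' then ((d : ℝ) * D ^ 2 - d) / ((d : ℝ) ^ 2 * D ^ 2 - 1) else 0 := by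
  classical
  obtain ⟨a, b, hab, ht'eq⟩ := ht'
  have ht'inv : t'⁻¹ = t' := by rw [ht'eq]; exact Equiv.swap_inv a b
  have ht1 : t ≠ 1 := by
    obtain ⟨c, e, hce, hteq⟩ := ht
    rw [hteq]
    intro h
    exact hce (Equiv.swap_eq_one_iff.1 h)
  have hq2 : 2 ≤ d * D := le_trans hk hkdD
  have h2R : (2:ℝ) ≤ (d:ℝ) * (D:ℝ) := by exact_mod_cast hq2
  have hdR : (0:ℝ) ≤ (d:ℝ) := Nat.cast_nonneg d
  have hDR : (0:ℝ) ≤ (D:ℝ) := Nat.cast_nonneg D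
  set α : ℝ := (D:ℝ) * ((d:ℝ)^2 - 1) / ((d:ℝ)^2*(D:ℝ)^2-1) with hα
  set β : ℝ := (d:ℝ) * ((D:ℝ)^2 - 1) / ((d:ℝ)^2*(D:ℝ)^2-1) with hβ
  set x : Equiv.Perm (Fin k) → ℝ :=
    fun τ => (if τ = 1 then α else 0) + (if τ = t' then β else 0) with hxdef
  set v : Equiv.Perm (Fin k) → ℝ :=
    fun σ => (d:ℝ) ^ cyc σ * (D:ℝ) ^ cyc (σ * t'⁻¹) with hvdef
  have hcast : ((d*D : ℕ):ℝ) = (d:ℝ) * (D:ℝ) := by push_cast; ring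
  have hGx : Gram k (d*D) *ᵥ x = v := by
    funext σ
    show ∑ τ : Equiv.Perm (Fin k), Gram k (d*D) σ τ * x τ = v σ
    have hsplit : ∀ τ : Equiv.Perm (Fin k), Gram k (d*D) σ τ * x τ =
        (if τ = 1 then Gram k (d*D) σ τ * α else 0)
          + (if τ = t' then Gram k (d*D) σ τ * β else 0) := by
      intro τ
      rw [hxdef]
      simp only [mul_add, mul_ite, mul_zero]
    simp only [hsplit]
    rw [Finset.sum_add_distrib, Finset.sum_ite_eq' Finset.univ (1 : Equiv.Perm (Fin k)),
      Finset.sum_ite_eq' Finset.univ t']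
    simp only [Finset.mem_univ, if_true]
    show ((d*D : ℕ):ℝ) ^ cyc (σ * 1⁻¹) * α + ((d*D : ℕ):ℝ) ^ cyc (σ * t'⁻¹) * β = v σ
    rw [inv_one, mul_one, ht'inv, hvdef, hcast, ht'eq]
    show ((d:ℝ) * (D:ℝ)) ^ cyc σ * α + ((d:ℝ) * (D:ℝ)) ^ cyc (σ * Equiv.swap a b) * β
        = (d:ℝ) ^ cyc σ * (D:ℝ) ^ cyc (σ * (Equiv.swap a b)⁻¹)
    rw [Equiv.swap_inv]
    have hsw := cyc_mul_swap σ hab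
    rcases hsw with h | h
    · rw [h, hα, hβ]
      exact scalar1 (cyc σ) h2R hdR hDR
    · rw [h, hα, hβ]
      exact scalar2 (cyc (σ * Equiv.swap a b)) h2R hdR hDR
  have hUnit : IsUnit (Gram k (d*D)).det := gram_isUnit hkdD
  have hx : (Gram k (d*D))⁻¹ *ᵥ v = x := by
    rw [← hGx, Matrix.mulVec_mulVec, Matrix.nonsing_inv_mul _ hUnit, Matrix.one_mulVec]
  have hsymm : (Gram k (d*D))ᵀ = Gram k (d*D) := by
    ext σ τ
    simp only [Matrix.transpose_apply, Gram, Matrix.of_apply]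
    congr 1
    rw [show τ * σ⁻¹ = (σ * τ⁻¹)⁻¹ by rw [_root_.mul_inv_rev, inv_inv], cyc_inv]
  have hCk : Ck k d D t t' = ∑ σ : Equiv.Perm (Fin k), (Gram k (d*D))⁻¹ σ t * v σ := by
    simp only [Ck, WgM, Matrix.of_apply, hvdef]
    exact Finset.sum_congr rfl fun σ _ => by ring
  have hcol : ∑ σ : Equiv.Perm (Fin k), (Gram k (d*D))⁻¹ σ t * v σ
      = (((Gram k (d*D))⁻¹)ᵀ *ᵥ v) t := by
    simp only [Matrix.mulVec, dotProduct, Matrix.transpose_apply]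
  rw [hCk, hcol, Matrix.transpose_nonsing_inv, hsymm, hx, hxdef]
  simp only [if_neg ht1, zero_add]
  by_cases h : t = t'
  · rw [if_pos h, if_pos h, hβ]
    congr 1
    ring
  · rw [if_neg h, if_neg h]
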